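/- Let 0 < α < n and 1 ≤ p < n/α. There is a constant A = A(n, α, p) such that for every measurable function f ≥ 0 with f ∈ L^p(ℝⁿ) and every x ∈ ℝⁿ, I_α f(x) ≤ A ‖f‖_p^{αp/n} (Mf(x))^{1 − αp/n}. -/

import Mathlib

open MeasureTheory Set ENNReal Metric

/-- The normalizing constant `γ_n(α) = π^(n/2) 2^α Γ(α/2) / Γ((n-α)/2)` of the Riesz
kernel. -/
noncomputable def rieszGamma (n : ℕ) (α : ℝ) : ℝ :=
  Real.pi ^ ((n : ℝ) / 2) * 2 ^ α * Real.Gamma (α / 2) / Real.Gamma (((n : ℝ) - α) / 2)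

/-- The Hardy–Littlewood maximal function, valued in the extended reals. -/
noncomputable def maximalFn {n : ℕ} (f : EuclideanSpace ℝ (Fin n) → ℝ)
    (x : EuclideanSpace ℝ (Fin n)) : ℝ≥0∞ :=
  ⨆ r ∈ Ioi (0:ℝ), (volume (ball x r))⁻¹ * ∫⁻ y in ball x r, ENNReal.ofReal |f y|


private lemma dyadic_down {t δ : ℝ} (ht : 0 < t) (htδ : t < δ) :
    ∃ k : ℕ, δ * (2:ℝ)⁻¹ ^ (k + 1) ≤ t ∧ t < δ * (2:ℝ)⁻¹ ^ k := by
  classical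
  have hδ : 0 < δ := ht.trans htδ
  have hP : ∃ k : ℕ, δ * (2:ℝ)⁻¹ ^ (k + 1) ≤ t := by
    obtain ⟨k, hk⟩ := exists_pow_lt_of_lt_one (div_pos ht hδ) (by norm_num : (2:ℝ)⁻¹ < 1)
    refine ⟨k, ?_⟩
    have h1 : (2:ℝ)⁻¹ ^ (k + 1) ≤ (2:ℝ)⁻¹ ^ k :=
      pow_le_pow_of_le_one (by norm_num) (by norm_num) (Nat.le_succ k)
    have h2 : (2:ℝ)⁻¹ ^ (k + 1) ≤ t / δ := h1.trans hk.le
    calc δ * (2:ℝ)⁻¹ ^ (k + 1) ≤ δ * (t / δ) := by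
          exact mul_le_mul_of_nonneg_left h2 hδ.le
      _ = t := by field_simp
  refine ⟨Nat.find hP, Nat.find_spec hP, ?_⟩
  rcases Nat.eq_zero_or_pos (Nat.find hP) with h0 | h0
  · rw [h0]; simpa using htδ
  · obtain ⟨m, hm⟩ := Nat.exists_eq_succ_of_ne_zero h0.ne'
    have hmin := Nat.find_min hP (m := m) (by omega)
    rw [hm]
    push_neg at hmin
    exact hmin

private lemma dyadic_up {t δ : ℝ} (hδ : 0 < δ) (htδ : δ ≤ t) :
    ∃ k : ℕ, δ * 2 ^ k ≤ t ∧ t < δ * 2 ^ (k + 1) := by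
  classical
  have hP : ∃ k : ℕ, t < δ * 2 ^ (k + 1) := by
    obtain ⟨k, hk⟩ := pow_unbounded_of_one_lt (t / δ) (by norm_num : (1:ℝ) < 2)
    refine ⟨k, ?_⟩
    have h2 : t / δ < 2 ^ (k + 1) :=
      hk.trans_le (pow_le_pow_right₀ (by norm_num) (Nat.le_succ k))
    calc t = δ * (t / δ) := by field_simp
      _ < δ * 2 ^ (k + 1) := by exact mul_lt_mul_of_pos_left h2 hδ
  refine ⟨Nat.find hP, ?_, Nat.find_spec hP⟩
  rcases Nat.eq_zero_or_pos (Nat.find hP) with h0 | h0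
  · rw [h0]; simpa using htδ
  · obtain ⟨m, hm⟩ := Nat.exists_eq_succ_of_ne_zero h0.ne'
    have hmin := Nat.find_min hP (m := m) (by omega)
    rw [hm]
    push_neg at hmin
    exact hmin

private lemma setLIntegral_le_maximal {n : ℕ} (f : EuclideanSpace ℝ (Fin n) → ℝ)
    (x : EuclideanSpace ℝ (Fin n)) {r : ℝ} (hr : 0 < r) :
    ∫⁻ y in ball x r, ENNReal.ofReal |f y| ≤ volume (ball x r) * maximalFn f x := by
  have h0 : volume (ball x r) ≠ 0 := (measure_ball_pos volume x hr).ne'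
  have ht : volume (ball x r) ≠ ⊤ := measure_ball_lt_top.ne
  have hle : (volume (ball x r))⁻¹ * ∫⁻ y in ball x r, ENNReal.ofReal |f y| ≤ maximalFn f x := by
    rw [maximalFn]
    exact le_iSup₂ (f := fun (r : ℝ) (_ : r ∈ Ioi (0:ℝ)) =>
      (volume (ball x r))⁻¹ * ∫⁻ y in ball x r, ENNReal.ofReal |f y|) r hr
  calc ∫⁻ y in ball x r, ENNReal.ofReal |f y|
      = volume (ball x r) * ((volume (ball x r))⁻¹ * ∫⁻ y in ball x r, ENNReal.ofReal |f y|) := by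
        rw [← mul_assoc, ENNReal.mul_inv_cancel h0 ht, one_mul]
    _ ≤ volume (ball x r) * maximalFn f x := mul_le_mul_right hle _

private lemma ae_zero_of_maximal_eq_zero {n : ℕ} {f : EuclideanSpace ℝ (Fin n) → ℝ}
    (hf : Measurable f) {x : EuclideanSpace ℝ (Fin n)}
    (hM : maximalFn f x = 0) : ∀ᵐ y, ENNReal.ofReal |f y| = 0 := by
  have hg : Measurable fun y => ENNReal.ofReal |f y| :=
    ENNReal.measurable_ofReal.comp hf.abs
  suffices h : ∫⁻ y, ENNReal.ofReal |f y| = 0 by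
    have := (lintegral_eq_zero_iff hg).mp h
    filter_upwards [this] with y hy using hy
  have hcov : (univ : Set (EuclideanSpace ℝ (Fin n))) ⊆ ⋃ k : ℕ, ball x (k + 1) := by
    intro y _
    obtain ⟨k, hk⟩ := exists_nat_gt (dist y x)
    exact mem_iUnion.mpr ⟨k, by simp [mem_ball]; linarith⟩
  have hball : ∀ k : ℕ, ∫⁻ y in ball x ((k:ℝ) + 1), ENNReal.ofReal |f y| = 0 := by
    intro k
    have hr : (0:ℝ) < (k:ℝ) + 1 := by positivity
    have h1 : (volume (ball x ((k:ℝ)+1)))⁻¹ * ∫⁻ y in ball x ((k:ℝ)+1), ENNReal.ofReal |f y| = 0 := by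
      refine le_antisymm ?_ zero_le
      rw [← hM, maximalFn]
      exact le_iSup₂ (f := fun (r : ℝ) (_ : r ∈ Ioi (0:ℝ)) =>
        (volume (ball x r))⁻¹ * ∫⁻ y in ball x r, ENNReal.ofReal |f y|) _ hr
    rcases mul_eq_zero.mp h1 with h | h
    · exact absurd (ENNReal.inv_eq_zero.mp h) measure_ball_lt_top.ne
    · exact h
  refine le_antisymm ?_ zero_le
  calc ∫⁻ y, ENNReal.ofReal |f y| = ∫⁻ y in univ, ENNReal.ofReal |f y| := (setLIntegral_univ _).symm
    _ ≤ ∫⁻ y in ⋃ k : ℕ, ball x ((k:ℝ) + 1), ENNReal.ofReal |f y| := lintegral_mono_set hcov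
    _ ≤ ∑' k : ℕ, ∫⁻ y in ball x ((k:ℝ) + 1), ENNReal.ofReal |f y| :=
        lintegral_iUnion_le _ _
    _ = 0 := by simp [hball]

private lemma near_const {δ α : ℝ} (hδ : 0 < δ) (n k : ℕ) :
    (δ * (2:ℝ)⁻¹ ^ (k + 1)) ^ (α - (n:ℝ)) * (δ * (2:ℝ)⁻¹ ^ k) ^ (n:ℕ)
      = δ ^ α * (2:ℝ) ^ ((n:ℝ) - α) * ((2:ℝ)⁻¹ ^ α) ^ k := by
  have hs : (0:ℝ) < (2:ℝ)⁻¹ ^ k := by positivity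
  set s : ℝ := (2:ℝ)⁻¹ ^ k with hs_def
  have hδs : (0:ℝ) < δ * s := by positivity
  have h1 : (2:ℝ)⁻¹ ^ (k + 1) = s * 2⁻¹ := by rw [hs_def, pow_succ]
  have h3 : ((δ * s) * 2⁻¹) ^ (α - (n:ℝ)) = (δ * s) ^ (α - (n:ℝ)) * (2:ℝ)⁻¹ ^ (α - (n:ℝ)) :=
    Real.mul_rpow hδs.le (by norm_num)
  have h4 : (δ * s) ^ (n:ℕ) = (δ * s) ^ ((n:ℕ):ℝ) := (Real.rpow_natCast _ n).symm
  have h5 : (δ * s) ^ (α - (n:ℝ)) * (δ * s) ^ ((n:ℕ):ℝ) = (δ * s) ^ α := by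
    rw [← Real.rpow_add hδs, sub_add_cancel]
  have h6 : (2:ℝ)⁻¹ ^ (α - (n:ℝ)) = (2:ℝ) ^ ((n:ℝ) - α) := by
    rw [Real.inv_rpow (by norm_num : (0:ℝ) ≤ 2), ← Real.rpow_neg (by norm_num : (0:ℝ) ≤ 2),
      neg_sub]
  have h7 : (δ * s) ^ α = δ ^ α * s ^ α := Real.mul_rpow hδ.le hs.le
  have h8 : s ^ α = ((2:ℝ)⁻¹ ^ α) ^ k := by
    rw [hs_def, ← Real.rpow_natCast ((2:ℝ)⁻¹) k, ← Real.rpow_natCast ((2:ℝ)⁻¹ ^ α) k,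
      ← Real.rpow_mul (by norm_num), ← Real.rpow_mul (by norm_num), mul_comm]
  calc (δ * (2:ℝ)⁻¹ ^ (k + 1)) ^ (α - (n:ℝ)) * (δ * s) ^ (n:ℕ)
      = (δ * s) ^ (α - (n:ℝ)) * (2:ℝ)⁻¹ ^ (α - (n:ℝ)) * (δ * s) ^ ((n:ℕ):ℝ) := by
        rw [h1, show δ * (s * 2⁻¹) = (δ * s) * 2⁻¹ by ring, h3, h4]
    _ = (δ * s) ^ α * (2:ℝ)⁻¹ ^ (α - (n:ℝ)) := by rw [mul_right_comm, h5]
    _ = δ ^ α * (2:ℝ) ^ ((n:ℝ) - α) * ((2:ℝ)⁻¹ ^ α) ^ k := by rw [h6, h7, h8]; ring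

private lemma near_bound {n : ℕ} (hn : 0 < n) {α : ℝ} (hα0 : 0 < α) (hαn : α < n)
    {f : EuclideanSpace ℝ (Fin n) → ℝ} (hf : Measurable f)
    (x : EuclideanSpace ℝ (Fin n)) {δ : ℝ} (hδ : 0 < δ) :
    ∫⁻ y in ball x δ, ENNReal.ofReal (‖x - y‖ ^ (α - (n:ℝ))) * ENNReal.ofReal |f y| ≤
      ENNReal.ofReal ((2:ℝ) ^ ((n:ℝ) - α) * (1 - (2:ℝ)⁻¹ ^ α)⁻¹ *
          (volume (ball (0 : EuclideanSpace ℝ (Fin n)) 1)).toReal * δ ^ α) *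
        maximalFn f x := by
  haveI : Nonempty (Fin n) := ⟨⟨0, hn⟩⟩
  set M := maximalFn f x with hM
  set v := volume (ball (0 : EuclideanSpace ℝ (Fin n)) 1) with hv
  have hv0 : v ≠ 0 := (measure_ball_pos volume _ one_pos).ne'
  have hvt : v ≠ ⊤ := measure_ball_lt_top.ne
  set K : EuclideanSpace ℝ (Fin n) → ℝ≥0∞ := fun y => ENNReal.ofReal (‖x - y‖ ^ (α - (n:ℝ))) with hK_def
  set g : EuclideanSpace ℝ (Fin n) → ℝ≥0∞ := fun y => ENNReal.ofReal |f y| with hg_def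
  have hg : Measurable g := ENNReal.measurable_ofReal.comp hf.abs
  set r : ℕ → ℝ := fun k => δ * (2:ℝ)⁻¹ ^ k with hr_def
  have hrpos : ∀ k, 0 < r k := fun k => by positivity
  have hcov : ball x δ ⊆ {x} ∪ ⋃ k : ℕ, (ball x (r k) \ ball x (r (k + 1))) := by
    intro y hy
    rcases eq_or_ne y x with rfl | hyx
    · exact Or.inl rfl
    · have ht : 0 < dist y x := dist_pos.mpr hyx
      obtain ⟨k, h1, h2⟩ := dyadic_down ht (mem_ball.mp hy)
      exact Or.inr (mem_iUnion.mpr ⟨k, mem_ball.mpr h2,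
        fun hc => absurd (mem_ball.mp hc) (not_lt.mpr h1)⟩)
  have hsing : ∫⁻ y in {x}, K y * g y = 0 := by
    rw [lintegral_singleton]
    have h0 : ‖x - x‖ ^ (α - (n:ℝ)) = 0 := by
      rw [sub_self, norm_zero, Real.zero_rpow (sub_ne_zero.mpr hαn.ne)]
    simp [hK_def, h0]
  have hann : ∀ k : ℕ, ∫⁻ y in ball x (r k) \ ball x (r (k + 1)), K y * g y
      ≤ ENNReal.ofReal (r (k + 1) ^ (α - (n:ℝ))) * (volume (ball x (r k)) * M) := by
    intro k
    have hstep : ∫⁻ y in ball x (r k) \ ball x (r (k + 1)), K y * g y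
        ≤ ∫⁻ y in ball x (r k) \ ball x (r (k + 1)),
            ENNReal.ofReal (r (k + 1) ^ (α - (n:ℝ))) * g y := by
      refine setLIntegral_mono (measurable_const.mul hg) ?_
      intro y hy
      refine mul_le_mul_left (ENNReal.ofReal_le_ofReal ?_) _
      have h1 : r (k + 1) ≤ ‖x - y‖ := by
        have h2 := hy.2
        rw [mem_ball, not_lt] at h2
        calc r (k + 1) ≤ dist y x := h2
          _ = ‖x - y‖ := by rw [dist_eq_norm, norm_sub_rev]
      exact Real.rpow_le_rpow_of_nonpos (hrpos _) h1 (by linarith)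
    refine hstep.trans ?_
    rw [lintegral_const_mul _ hg]
    refine mul_le_mul_right ?_ _
    calc ∫⁻ y in ball x (r k) \ ball x (r (k + 1)), g y
        ≤ ∫⁻ y in ball x (r k), g y := lintegral_mono_set diff_subset
      _ ≤ volume (ball x (r k)) * M := setLIntegral_le_maximal f x (hrpos k)
  have hterm : ∀ k : ℕ, ENNReal.ofReal (r (k + 1) ^ (α - (n:ℝ))) * (volume (ball x (r k)) * M)
      = ENNReal.ofReal (δ ^ α * (2:ℝ) ^ ((n:ℝ) - α)) * (v * M) *
          ENNReal.ofReal ((2:ℝ)⁻¹ ^ α) ^ k := by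
    intro k
    rw [Measure.addHaar_ball volume x (hrpos k).le, finrank_euclideanSpace_fin]
    rw [show ENNReal.ofReal (r (k + 1) ^ (α - (n:ℝ))) * (ENNReal.ofReal (r k ^ n) * v * M)
        = (ENNReal.ofReal (r (k + 1) ^ (α - (n:ℝ))) * ENNReal.ofReal (r k ^ n)) * (v * M) from by
      ring]
    rw [← ENNReal.ofReal_mul (by positivity), hr_def, near_const hδ n k,
      ENNReal.ofReal_mul (by positivity), ENNReal.ofReal_pow (by positivity)]
    ring
  have hρ1 : (2:ℝ)⁻¹ ^ α < 1 :=
    Real.rpow_lt_one (by norm_num) (by norm_num) hα0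
  have hsum : ∑' k : ℕ, ENNReal.ofReal (δ ^ α * (2:ℝ) ^ ((n:ℝ) - α)) * (v * M) *
      ENNReal.ofReal ((2:ℝ)⁻¹ ^ α) ^ k
      = ENNReal.ofReal ((2:ℝ) ^ ((n:ℝ) - α) * (1 - (2:ℝ)⁻¹ ^ α)⁻¹ * v.toReal * δ ^ α) * M := by
    rw [ENNReal.tsum_mul_left, ENNReal.tsum_geometric]
    have h1 : (1 : ℝ≥0∞) - ENNReal.ofReal ((2:ℝ)⁻¹ ^ α) = ENNReal.ofReal (1 - (2:ℝ)⁻¹ ^ α) := by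
      rw [ENNReal.ofReal_sub _ (by positivity), ENNReal.ofReal_one]
    have h3 : ENNReal.ofReal ((2:ℝ) ^ ((n:ℝ) - α) * (1 - (2:ℝ)⁻¹ ^ α)⁻¹ * v.toReal * δ ^ α)
        = ENNReal.ofReal (δ ^ α * (2:ℝ) ^ ((n:ℝ) - α)) *
            (ENNReal.ofReal ((1 - (2:ℝ)⁻¹ ^ α)⁻¹) * v) := by
      conv_rhs => rw [← ENNReal.ofReal_toReal hvt]
      rw [← ENNReal.ofReal_mul (inv_nonneg.mpr (by linarith)),
        ← ENNReal.ofReal_mul (by positivity)]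
      congr 1
      ring
    rw [h1, ← ENNReal.ofReal_inv_of_pos (by linarith), h3]
    ring
  calc ∫⁻ y in ball x δ, K y * g y
      ≤ ∫⁻ y in {x} ∪ ⋃ k : ℕ, (ball x (r k) \ ball x (r (k + 1))), K y * g y :=
        lintegral_mono_set hcov
    _ ≤ (∫⁻ y in {x}, K y * g y) +
          ∫⁻ y in ⋃ k : ℕ, (ball x (r k) \ ball x (r (k + 1))), K y * g y :=
        lintegral_union_le _ _ _
    _ = ∫⁻ y in ⋃ k : ℕ, (ball x (r k) \ ball x (r (k + 1))), K y * g y := by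
        rw [hsing, zero_add]
    _ ≤ ∑' k : ℕ, ∫⁻ y in ball x (r k) \ ball x (r (k + 1)), K y * g y :=
        lintegral_iUnion_le _ _
    _ ≤ ∑' k : ℕ, ENNReal.ofReal (r (k + 1) ^ (α - (n:ℝ))) * (volume (ball x (r k)) * M) :=
        ENNReal.tsum_le_tsum hann
    _ = ∑' k : ℕ, ENNReal.ofReal (δ ^ α * (2:ℝ) ^ ((n:ℝ) - α)) * (v * M) *
          ENNReal.ofReal ((2:ℝ)⁻¹ ^ α) ^ k := by
        exact tsum_congr hterm
    _ = ENNReal.ofReal ((2:ℝ) ^ ((n:ℝ) - α) * (1 - (2:ℝ)⁻¹ ^ α)⁻¹ * v.toReal * δ ^ α) * M :=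
        hsum

private lemma far_const {δ β : ℝ} (hδ : 0 < δ) (n k : ℕ) :
    (δ * (2:ℝ) ^ k) ^ β * (δ * (2:ℝ) ^ (k + 1)) ^ (n:ℕ)
      = δ ^ (β + (n:ℝ)) * (2:ℝ) ^ ((n:ℝ)) * ((2:ℝ) ^ (β + (n:ℝ))) ^ k := by
  have hs : (0:ℝ) < (2:ℝ) ^ k := by positivity
  set s : ℝ := (2:ℝ) ^ k with hs_def
  have hδs : (0:ℝ) < δ * s := by positivity
  have h1 : (2:ℝ) ^ (k + 1) = s * 2 := by rw [hs_def, pow_succ]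
  have h2 : (δ * (s * 2)) ^ (n:ℕ) = (δ * s) ^ ((n:ℕ):ℝ) * (2:ℝ) ^ ((n:ℕ):ℝ) := by
    rw [show δ * (s * 2) = (δ * s) * 2 by ring, mul_pow, Real.rpow_natCast, Real.rpow_natCast]
  have h5 : (δ * s) ^ β * (δ * s) ^ ((n:ℕ):ℝ) = (δ * s) ^ (β + (n:ℝ)) := by
    rw [← Real.rpow_add hδs]
  have h7 : (δ * s) ^ (β + (n:ℝ)) = δ ^ (β + (n:ℝ)) * s ^ (β + (n:ℝ)) :=
    Real.mul_rpow hδ.le hs.le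
  have h8 : s ^ (β + (n:ℝ)) = ((2:ℝ) ^ (β + (n:ℝ))) ^ k := by
    rw [hs_def, ← Real.rpow_natCast (2:ℝ) k, ← Real.rpow_natCast ((2:ℝ) ^ (β + (n:ℝ))) k,
      ← Real.rpow_mul (by norm_num), ← Real.rpow_mul (by norm_num), mul_comm]
  rw [h1]
  calc (δ * s) ^ β * (δ * (s * 2)) ^ (n:ℕ)
      = (δ * s) ^ β * ((δ * s) ^ ((n:ℕ):ℝ) * (2:ℝ) ^ ((n:ℕ):ℝ)) := by rw [h2]
    _ = (δ * s) ^ (β + (n:ℝ)) * (2:ℝ) ^ ((n:ℕ):ℝ) := by rw [← mul_assoc, h5]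
    _ = δ ^ (β + (n:ℝ)) * (2:ℝ) ^ ((n:ℝ)) * ((2:ℝ) ^ (β + (n:ℝ))) ^ k := by
        rw [h7, h8]; ring

private lemma far_kernel {n : ℕ} (hn : 0 < n) {β : ℝ} (hβ : β + (n:ℝ) < 0)
    (x : EuclideanSpace ℝ (Fin n)) {δ : ℝ} (hδ : 0 < δ) :
    ∫⁻ y in (ball x δ)ᶜ, ENNReal.ofReal (‖x - y‖ ^ β) ≤
      ENNReal.ofReal (δ ^ (β + (n:ℝ)) * ((2:ℝ) ^ (n:ℝ) * (1 - (2:ℝ) ^ (β + (n:ℝ)))⁻¹ *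
        (volume (ball (0 : EuclideanSpace ℝ (Fin n)) 1)).toReal)) := by
  haveI : Nonempty (Fin n) := ⟨⟨0, hn⟩⟩
  set v := volume (ball (0 : EuclideanSpace ℝ (Fin n)) 1) with hv
  have hvt : v ≠ ⊤ := measure_ball_lt_top.ne
  have hn0 : (0:ℝ) ≤ (n:ℝ) := Nat.cast_nonneg n
  have hβ0 : β ≤ 0 := by linarith
  have hρ1 : (2:ℝ) ^ (β + (n:ℝ)) < 1 :=
    Real.rpow_lt_one_of_one_lt_of_neg (by norm_num) hβ
  have hρ0 : (0:ℝ) < (2:ℝ) ^ (β + (n:ℝ)) := Real.rpow_pos_of_pos (by norm_num) _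
  set r : ℕ → ℝ := fun k => δ * (2:ℝ) ^ k with hr_def
  have hrpos : ∀ k, 0 < r k := fun k => by positivity
  have hcov : (ball x δ)ᶜ ⊆ ⋃ k : ℕ, (ball x (r (k + 1)) \ ball x (r k)) := by
    intro y hy
    have ht : δ ≤ dist y x := by simpa [mem_ball, not_lt] using hy
    obtain ⟨k, h1, h2⟩ := dyadic_up hδ ht
    exact mem_iUnion.mpr ⟨k, mem_ball.mpr h2, fun hc => absurd (mem_ball.mp hc) (not_lt.mpr h1)⟩
  have hann : ∀ k : ℕ, ∫⁻ y in ball x (r (k + 1)) \ ball x (r k), ENNReal.ofReal (‖x - y‖ ^ β)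
      ≤ ENNReal.ofReal (r k ^ β) * volume (ball x (r (k + 1))) := by
    intro k
    have hstep : ∫⁻ y in ball x (r (k + 1)) \ ball x (r k), ENNReal.ofReal (‖x - y‖ ^ β)
        ≤ ∫⁻ _ in ball x (r (k + 1)) \ ball x (r k), ENNReal.ofReal (r k ^ β) := by
      refine setLIntegral_mono measurable_const ?_
      intro y hy
      refine ENNReal.ofReal_le_ofReal ?_
      have h1 : r k ≤ ‖x - y‖ := by
        have h2 := hy.2
        rw [mem_ball, not_lt] at h2
        calc r k ≤ dist y x := h2
          _ = ‖x - y‖ := by rw [dist_eq_norm, norm_sub_rev]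
      exact Real.rpow_le_rpow_of_nonpos (hrpos _) h1 hβ0
    refine hstep.trans ?_
    rw [setLIntegral_const]
    exact mul_le_mul_right (measure_mono diff_subset) _
  have hterm : ∀ k : ℕ, ENNReal.ofReal (r k ^ β) * volume (ball x (r (k + 1)))
      = ENNReal.ofReal (δ ^ (β + (n:ℝ)) * (2:ℝ) ^ ((n:ℝ))) * v *
          ENNReal.ofReal ((2:ℝ) ^ (β + (n:ℝ))) ^ k := by
    intro k
    rw [Measure.addHaar_ball volume x (hrpos (k + 1)).le, finrank_euclideanSpace_fin, ← hv,
      ← mul_assoc, ← ENNReal.ofReal_mul (by positivity), hr_def, far_const hδ n k,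
      ENNReal.ofReal_mul (by positivity), ENNReal.ofReal_pow hρ0.le]
    ring
  have hsum : ∑' k : ℕ, ENNReal.ofReal (δ ^ (β + (n:ℝ)) * (2:ℝ) ^ ((n:ℝ))) * v *
      ENNReal.ofReal ((2:ℝ) ^ (β + (n:ℝ))) ^ k
      = ENNReal.ofReal (δ ^ (β + (n:ℝ)) * (2:ℝ) ^ ((n:ℝ))) * v *
          (1 - ENNReal.ofReal ((2:ℝ) ^ (β + (n:ℝ))))⁻¹ := by
    rw [ENNReal.tsum_mul_left, ENNReal.tsum_geometric]
  have hfin : ENNReal.ofReal (δ ^ (β + (n:ℝ)) * (2:ℝ) ^ ((n:ℝ))) * v *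
      (1 - ENNReal.ofReal ((2:ℝ) ^ (β + (n:ℝ))))⁻¹
      = ENNReal.ofReal (δ ^ (β + (n:ℝ)) * ((2:ℝ) ^ (n:ℝ) * (1 - (2:ℝ) ^ (β + (n:ℝ)))⁻¹ *
          v.toReal)) := by
    have h1 : (1 : ℝ≥0∞) - ENNReal.ofReal ((2:ℝ) ^ (β + (n:ℝ)))
        = ENNReal.ofReal (1 - (2:ℝ) ^ (β + (n:ℝ))) := by
      rw [ENNReal.ofReal_sub _ hρ0.le, ENNReal.ofReal_one]
    rw [h1, ← ENNReal.ofReal_inv_of_pos (by linarith)]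
    conv_lhs => rw [← ENNReal.ofReal_toReal hvt]
    rw [← ENNReal.ofReal_mul (by positivity), ← ENNReal.ofReal_mul (by positivity)]
    congr 1
    ring
  calc ∫⁻ y in (ball x δ)ᶜ, ENNReal.ofReal (‖x - y‖ ^ β)
      ≤ ∫⁻ y in ⋃ k : ℕ, (ball x (r (k + 1)) \ ball x (r k)), ENNReal.ofReal (‖x - y‖ ^ β) :=
        lintegral_mono_set hcov
    _ ≤ ∑' k : ℕ, ∫⁻ y in ball x (r (k + 1)) \ ball x (r k), ENNReal.ofReal (‖x - y‖ ^ β) :=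
        lintegral_iUnion_le _ _
    _ ≤ ∑' k : ℕ, ENNReal.ofReal (r k ^ β) * volume (ball x (r (k + 1))) :=
        ENNReal.tsum_le_tsum hann
    _ = ∑' k : ℕ, ENNReal.ofReal (δ ^ (β + (n:ℝ)) * (2:ℝ) ^ ((n:ℝ))) * v *
          ENNReal.ofReal ((2:ℝ) ^ (β + (n:ℝ))) ^ k := tsum_congr hterm
    _ = _ := by rw [hsum, hfin]

private lemma eLpNorm_eq_abs {n : ℕ} (f : EuclideanSpace ℝ (Fin n) → ℝ) {p : ℝ} (hp1 : 1 ≤ p) :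
    eLpNorm f (ENNReal.ofReal p) volume
      = (∫⁻ y, ENNReal.ofReal |f y| ^ p) ^ (1 / p) := by
  have hp0 : (0:ℝ) < p := by linarith
  rw [eLpNorm_eq_lintegral_rpow_enorm_toReal (ENNReal.ofReal_pos.mpr hp0).ne' ENNReal.ofReal_ne_top,
    ENNReal.toReal_ofReal hp0.le]
  congr 1
  refine lintegral_congr fun y => ?_
  rw [Real.enorm_eq_ofReal_abs]

private lemma far_bound {n : ℕ} (hn : 0 < n) {α p : ℝ} (hα0 : 0 < α) (hαn : α < (n:ℝ))
    (hp1 : 1 ≤ p) (hp2 : p < (n:ℝ) / α) :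
    ∃ C₂ : ℝ, 0 < C₂ ∧ ∀ f : EuclideanSpace ℝ (Fin n) → ℝ, Measurable f →
      ∀ (x : EuclideanSpace ℝ (Fin n)) (δ : ℝ), 0 < δ →
      ∫⁻ y in (ball x δ)ᶜ, ENNReal.ofReal (‖x - y‖ ^ (α - (n:ℝ))) * ENNReal.ofReal |f y| ≤
        ENNReal.ofReal (C₂ * δ ^ (α - (n:ℝ) / p)) * eLpNorm f (ENNReal.ofReal p) volume := by
  haveI : Nonempty (Fin n) := ⟨⟨0, hn⟩⟩
  rcases eq_or_lt_of_le hp1 with heq | hlt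
  · -- p = 1
    obtain rfl : p = 1 := heq.symm
    refine ⟨1, one_pos, ?_⟩
    intro f hf x δ hδ
    have hg : Measurable fun y => ENNReal.ofReal |f y| :=
      ENNReal.measurable_ofReal.comp hf.abs
    rw [ENNReal.ofReal_one, eLpNorm_one_eq_lintegral_enorm, div_one, one_mul]
    calc ∫⁻ y in (ball x δ)ᶜ, ENNReal.ofReal (‖x - y‖ ^ (α - (n:ℝ))) * ENNReal.ofReal |f y|
        ≤ ∫⁻ y in (ball x δ)ᶜ, ENNReal.ofReal (δ ^ (α - (n:ℝ))) * ENNReal.ofReal |f y| := by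
          refine setLIntegral_mono (measurable_const.mul hg) ?_
          intro y hy
          refine mul_le_mul_left (ENNReal.ofReal_le_ofReal ?_) _
          have h2 : δ ≤ ‖x - y‖ := by
            have h3 : δ ≤ dist y x := by simpa [mem_ball, not_lt] using hy
            rwa [dist_eq_norm, norm_sub_rev] at h3
          exact Real.rpow_le_rpow_of_nonpos hδ h2 (by linarith)
      _ = ENNReal.ofReal (δ ^ (α - (n:ℝ))) * ∫⁻ y in (ball x δ)ᶜ, ENNReal.ofReal |f y| :=
          lintegral_const_mul _ hg
      _ ≤ ENNReal.ofReal (δ ^ (α - (n:ℝ))) * ∫⁻ y, ENNReal.ofReal |f y| :=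
          mul_le_mul_right (setLIntegral_le_lintegral _ _) _
      _ = ENNReal.ofReal (δ ^ (α - (n:ℝ))) * ∫⁻ y, (‖f y‖₊ : ℝ≥0∞) := by
          congr 1
          exact lintegral_congr fun y => (Real.enorm_eq_ofReal_abs _).symm
  · -- 1 < p
    set v := volume (ball (0 : EuclideanSpace ℝ (Fin n)) 1) with hv
    have hv0 : v ≠ 0 := (measure_ball_pos volume _ one_pos).ne'
    have hvt : v ≠ ⊤ := measure_ball_lt_top.ne
    have hpq := Real.HolderConjugate.conjExponent hlt
    set q := p.conjExponent with hqdef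
    have hq0 : q ≠ 0 := hpq.symm.ne_zero
    have hqpos : 0 < q := hpq.symm.pos
    have hp0 : (0:ℝ) < p := by linarith
    set β := (α - (n:ℝ)) * q with hβdef
    have hpα : p * α < n := (lt_div_iff₀ hα0).mp hp2
    have hp1' : (0:ℝ) < p - 1 := by linarith
    have hβn : β + (n:ℝ) < 0 := by
      have hqeq : q = p / (p - 1) := hpq.conjugate_eq
      have h4 : β + (n:ℝ) = (α * p - n) / (p - 1) := by
        rw [hβdef, hqeq]; field_simp; ring
      rw [h4]
      exact div_neg_of_neg_of_pos (by nlinarith) hp1'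
    have hρ1 : (2:ℝ) ^ (β + (n:ℝ)) < 1 :=
      Real.rpow_lt_one_of_one_lt_of_neg (by norm_num) hβn
    set c₃ := (2:ℝ) ^ ((n:ℝ)) * (1 - (2:ℝ) ^ (β + (n:ℝ)))⁻¹ * v.toReal with hc₃def
    have hc₃ : 0 < c₃ := by
      have h1 : (0:ℝ) < (1 - (2:ℝ) ^ (β + (n:ℝ)))⁻¹ := inv_pos.mpr (by linarith)
      have h2 : 0 < v.toReal := ENNReal.toReal_pos hv0 hvt
      have h3 : (0:ℝ) < (2:ℝ) ^ ((n:ℝ)) := Real.rpow_pos_of_pos (by norm_num) _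
      positivity
    have hexp : (β + (n:ℝ)) * (1 / q) = α - (n:ℝ) / p := by
      have hinv : q⁻¹ = 1 - p⁻¹ := by
        have := hpq.inv_add_inv_eq_one; linarith
      have h5 : (β + (n:ℝ)) * (1 / q) = (α - (n:ℝ)) + (n:ℝ) * q⁻¹ := by
        rw [hβdef]; field_simp
      rw [h5, hinv, div_eq_mul_inv]; ring
    refine ⟨c₃ ^ (1 / q), Real.rpow_pos_of_pos hc₃ _, ?_⟩
    intro f hf x δ hδ
    have hg : Measurable fun y => ENNReal.ofReal |f y| :=
      ENNReal.measurable_ofReal.comp hf.abs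
    have hK : Measurable fun y : EuclideanSpace ℝ (Fin n) =>
        ENNReal.ofReal (‖x - y‖ ^ (α - (n:ℝ))) := by
      apply ENNReal.measurable_ofReal.comp
      apply Measurable.pow_const
      exact (continuous_const.sub continuous_id).norm.measurable
    have hKint : ∫⁻ y in (ball x δ)ᶜ, (ENNReal.ofReal (‖x - y‖ ^ (α - (n:ℝ)))) ^ q
        = ∫⁻ y in (ball x δ)ᶜ, ENNReal.ofReal (‖x - y‖ ^ β) := by
      refine setLIntegral_congr_fun measurableSet_ball.compl (fun y hy => ?_)
      have hyx : 0 < ‖x - y‖ := by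
        have h3 : δ ≤ dist y x := by simpa [mem_ball, not_lt] using hy
        rw [dist_eq_norm, norm_sub_rev] at h3
        linarith
      rw [ENNReal.ofReal_rpow_of_pos (Real.rpow_pos_of_pos hyx _), ← Real.rpow_mul hyx.le,
        ← hβdef]
    have hH := ENNReal.lintegral_mul_le_Lp_mul_Lq (volume.restrict (ball x δ)ᶜ) hpq
      hg.aemeasurable hK.aemeasurable
    have hcomm : ∫⁻ y in (ball x δ)ᶜ,
        ENNReal.ofReal (‖x - y‖ ^ (α - (n:ℝ))) * ENNReal.ofReal |f y|
        = ∫⁻ a in (ball x δ)ᶜ,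
            ((fun y => ENNReal.ofReal |f y|) * fun y =>
              ENNReal.ofReal (‖x - y‖ ^ (α - (n:ℝ)))) a :=
      lintegral_congr fun y => by simp [mul_comm]
    have hbound1 : (∫⁻ a in (ball x δ)ᶜ, ENNReal.ofReal |f a| ^ p) ^ (1 / p)
        ≤ eLpNorm f (ENNReal.ofReal p) volume := by
      rw [eLpNorm_eq_abs f hp1]
      exact ENNReal.rpow_le_rpow (setLIntegral_le_lintegral _ _) (by positivity)
    have hbound2 : (∫⁻ a in (ball x δ)ᶜ, ENNReal.ofReal (‖x - a‖ ^ (α - (n:ℝ))) ^ q) ^ (1 / q)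
        ≤ ENNReal.ofReal (c₃ ^ (1 / q) * δ ^ (α - (n:ℝ) / p)) := by
      rw [hKint]
      calc (∫⁻ y in (ball x δ)ᶜ, ENNReal.ofReal (‖x - y‖ ^ β)) ^ (1 / q)
          ≤ (ENNReal.ofReal (δ ^ (β + (n:ℝ)) * c₃)) ^ (1 / q) :=
            ENNReal.rpow_le_rpow (far_kernel hn hβn x hδ) (by positivity)
        _ = ENNReal.ofReal ((δ ^ (β + (n:ℝ)) * c₃) ^ (1 / q)) :=
            ENNReal.ofReal_rpow_of_pos (by positivity)
        _ = ENNReal.ofReal (c₃ ^ (1 / q) * δ ^ (α - (n:ℝ) / p)) := by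
            rw [Real.mul_rpow (by positivity) hc₃.le, ← Real.rpow_mul hδ.le, hexp]
            congr 1
            ring
    calc ∫⁻ y in (ball x δ)ᶜ, ENNReal.ofReal (‖x - y‖ ^ (α - (n:ℝ))) * ENNReal.ofReal |f y|
        = ∫⁻ a in (ball x δ)ᶜ,
            ((fun y => ENNReal.ofReal |f y|) * fun y =>
              ENNReal.ofReal (‖x - y‖ ^ (α - (n:ℝ)))) a := hcomm
      _ ≤ (∫⁻ a in (ball x δ)ᶜ, ENNReal.ofReal |f a| ^ p) ^ (1 / p) *
            (∫⁻ a in (ball x δ)ᶜ, ENNReal.ofReal (‖x - a‖ ^ (α - (n:ℝ))) ^ q) ^ (1 / q) := hH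
      _ ≤ eLpNorm f (ENNReal.ofReal p) volume *
            ENNReal.ofReal (c₃ ^ (1 / q) * δ ^ (α - (n:ℝ) / p)) := mul_le_mul' hbound1 hbound2
      _ = ENNReal.ofReal (c₃ ^ (1 / q) * δ ^ (α - (n:ℝ) / p)) *
            eLpNorm f (ENNReal.ofReal p) volume := mul_comm _ _

private lemma near_bound' {n : ℕ} (hn : 0 < n) {α : ℝ} (hα0 : 0 < α) (hαn : α < (n:ℝ)) :
    ∃ C₁ : ℝ, 0 < C₁ ∧ ∀ f : EuclideanSpace ℝ (Fin n) → ℝ, Measurable f →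
      ∀ (x : EuclideanSpace ℝ (Fin n)) (δ : ℝ), 0 < δ →
      ∫⁻ y in ball x δ, ENNReal.ofReal (‖x - y‖ ^ (α - (n:ℝ))) * ENNReal.ofReal |f y| ≤
        ENNReal.ofReal (C₁ * δ ^ α) * maximalFn f x := by
  haveI : Nonempty (Fin n) := ⟨⟨0, hn⟩⟩
  have hv0 : volume (ball (0 : EuclideanSpace ℝ (Fin n)) 1) ≠ 0 :=
    (measure_ball_pos volume _ one_pos).ne'
  have hvt : volume (ball (0 : EuclideanSpace ℝ (Fin n)) 1) ≠ ⊤ := measure_ball_lt_top.ne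
  have hρ1 : (2:ℝ)⁻¹ ^ α < 1 := Real.rpow_lt_one (by norm_num) (by norm_num) hα0
  refine ⟨(2:ℝ) ^ ((n:ℝ) - α) * (1 - (2:ℝ)⁻¹ ^ α)⁻¹ *
    (volume (ball (0 : EuclideanSpace ℝ (Fin n)) 1)).toReal, ?_, ?_⟩
  · exact mul_pos (mul_pos (Real.rpow_pos_of_pos (by norm_num) _)
      (inv_pos.mpr (by linarith))) (ENNReal.toReal_pos hv0 hvt)
  · intro f hf x δ hδ
    exact near_bound hn hα0 hαn hf x hδ


/-- **Hedberg's pointwise inequality.** Let `0 < α < n`, `1 ≤ p < n/α`. There is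
`A = A(n, α, p) > 0` such that for every measurable `f ≥ 0` with `f ∈ L^p(ℝⁿ)` and every
`x ∈ ℝⁿ`, `I_α f(x) ≤ A ‖f‖_p^(αp/n) (Mf(x))^(1-αp/n)`, the Riesz potential
`I_α f(x) = (1/γ_n(α)) ∫ |x-y|^(α-n) f(y) dy` being interpreted in the extended reals. -/
theorem hedberg_pointwise_inequality (n : ℕ) (hn : 0 < n) (α p : ℝ)
    (hα0 : 0 < α) (hαn : α < n) (hp1 : 1 ≤ p) (hp2 : p < (n : ℝ) / α) :
    ∃ A : ℝ, 0 < A ∧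
      ∀ f : EuclideanSpace ℝ (Fin n) → ℝ, Measurable f → (∀ x, 0 ≤ f x) →
        MemLp f (ENNReal.ofReal p) volume →
        ∀ x : EuclideanSpace ℝ (Fin n),
          ENNReal.ofReal (rieszGamma n α)⁻¹ *
              (∫⁻ y, ENNReal.ofReal (‖x - y‖ ^ (α - (n : ℝ)) * f y))
            ≤ ENNReal.ofReal A *
                (eLpNorm f (ENNReal.ofReal p) volume) ^ (α * p / n) *
                (maximalFn f x) ^ (1 - α * p / n) := by
  haveI : Nonempty (Fin n) := ⟨⟨0, hn⟩⟩
  have hn0 : (0:ℝ) < (n:ℝ) := Nat.cast_pos.mpr hn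
  have hp0 : (0:ℝ) < p := by linarith
  have hpα : p * α < n := (lt_div_iff₀ hα0).mp hp2
  obtain ⟨C₁, hC₁pos, hC₁⟩ := near_bound' hn hα0 hαn
  obtain ⟨C₂, hC₂pos, hC₂⟩ := far_bound hn hα0 hαn hp1 hp2
  have hγ : 0 < rieszGamma n α := by
    refine div_pos (mul_pos (mul_pos ?_ ?_) ?_) ?_
    · exact Real.rpow_pos_of_pos Real.pi_pos _
    · exact Real.rpow_pos_of_pos (by norm_num) _
    · exact Real.Gamma_pos_of_pos (by linarith)
    · exact Real.Gamma_pos_of_pos (by linarith)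
  refine ⟨(rieszGamma n α)⁻¹ * (C₁ + C₂),
    mul_pos (inv_pos.mpr hγ) (by linarith), ?_⟩
  intro f hf hf0 hmem x
  set θ := α * p / n with hθdef
  have hθ0 : 0 < θ := by positivity
  have hθ1 : θ < 1 := by
    rw [hθdef, div_lt_one hn0]; nlinarith
  set N := eLpNorm f (ENNReal.ofReal p) volume with hNdef
  set M := maximalFn f x with hMdef
  have hNt : N ≠ ⊤ := hmem.2.ne
  have hg : Measurable fun y => ENNReal.ofReal |f y| :=
    ENNReal.measurable_ofReal.comp hf.abs
  have hint : ∫⁻ y, ENNReal.ofReal (‖x - y‖ ^ (α - (n : ℝ)) * f y)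
      = ∫⁻ y, ENNReal.ofReal (‖x - y‖ ^ (α - (n:ℝ))) * ENNReal.ofReal |f y| := by
    refine lintegral_congr fun y => ?_
    rw [ENNReal.ofReal_mul (by positivity), abs_of_nonneg (hf0 y)]
  rw [hint]
  by_cases hN0 : N = 0
  · have hfae : f =ᵐ[volume] 0 :=
      (eLpNorm_eq_zero_iff hf.aestronglyMeasurable
        (ENNReal.ofReal_pos.mpr hp0).ne').mp hN0
    have hzero : (∫⁻ y, ENNReal.ofReal (‖x - y‖ ^ (α - (n:ℝ))) * ENNReal.ofReal |f y|) = 0 := by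
      have hae : (fun y => ENNReal.ofReal (‖x - y‖ ^ (α - (n:ℝ))) * ENNReal.ofReal |f y|)
          =ᵐ[volume] (fun _ => (0:ℝ≥0∞)) := by
        filter_upwards [hfae] with y hy
        have hy' : f y = 0 := hy
        simp [hy']
      rw [lintegral_congr_ae hae, lintegral_zero]
    rw [hzero, mul_zero]
    exact zero_le
  by_cases hMtop : M = ⊤
  · rw [hMtop, ENNReal.top_rpow_of_pos (by linarith), ENNReal.mul_top]
    · exact le_top
    · refine mul_ne_zero ?_ ?_
      · exact (ENNReal.ofReal_pos.mpr (mul_pos (inv_pos.mpr hγ) (by linarith))).ne'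
      · simp [ENNReal.rpow_eq_zero_iff, hN0, hNt]
  by_cases hM0 : M = 0
  · have hae := ae_zero_of_maximal_eq_zero hf (x := x) hM0
    have hzero : (∫⁻ y, ENNReal.ofReal (‖x - y‖ ^ (α - (n:ℝ))) * ENNReal.ofReal |f y|) = 0 := by
      have hae' : (fun y => ENNReal.ofReal (‖x - y‖ ^ (α - (n:ℝ))) * ENNReal.ofReal |f y|)
          =ᵐ[volume] (fun _ => (0:ℝ≥0∞)) := by
        filter_upwards [hae] with y hy
        rw [hy, mul_zero]
      rw [lintegral_congr_ae hae', lintegral_zero]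
    rw [hzero, mul_zero]
    exact zero_le
  -- main case
  set Nr := N.toReal with hNrdef
  set Mr := M.toReal with hMrdef
  have hNr : 0 < Nr := ENNReal.toReal_pos hN0 hNt
  have hMr : 0 < Mr := ENNReal.toReal_pos hM0 hMtop
  have hNof : N = ENNReal.ofReal Nr := (ENNReal.ofReal_toReal hNt).symm
  have hMof : M = ENNReal.ofReal Mr := (ENNReal.ofReal_toReal hMtop).symm
  set δ := (Nr / Mr) ^ (p / (n:ℝ)) with hδdef
  have ht0 : 0 < Nr / Mr := div_pos hNr hMr
  have hδ : 0 < δ := Real.rpow_pos_of_pos ht0 _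
  have hd1 : δ ^ α = Nr ^ θ * Mr ^ (-θ) := by
    rw [hδdef, ← Real.rpow_mul ht0.le, show p / (n:ℝ) * α = θ by rw [hθdef]; ring,
      Real.div_rpow hNr.le hMr.le, Real.rpow_neg hMr.le, div_eq_mul_inv]
  have hd2 : δ ^ (α - (n:ℝ) / p) = Nr ^ (θ - 1) * Mr ^ (1 - θ) := by
    rw [hδdef, ← Real.rpow_mul ht0.le,
      show p / (n:ℝ) * (α - (n:ℝ) / p) = θ - 1 by rw [hθdef]; field_simp,
      Real.div_rpow hNr.le hMr.le, div_eq_mul_inv, ← Real.rpow_neg hMr.le, neg_sub]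
  have hmm : Mr ^ (-θ) * Mr = Mr ^ (1 - θ) := by
    nth_rewrite 2 [← Real.rpow_one Mr]
    rw [← Real.rpow_add hMr]
    ring_nf
  have hnn : Nr ^ (θ - 1) * Nr = Nr ^ θ := by
    nth_rewrite 2 [← Real.rpow_one Nr]
    rw [← Real.rpow_add hNr]
    ring_nf
  have hkey1 : C₁ * δ ^ α * Mr = C₁ * (Nr ^ θ * Mr ^ (1 - θ)) := by
    rw [hd1, mul_assoc, mul_assoc, mul_comm (Mr ^ (-θ)) Mr]
    rw [show Nr ^ θ * (Mr * Mr ^ (-θ)) = Nr ^ θ * (Mr ^ (-θ) * Mr) by ring, hmm]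
  have hkey2 : C₂ * δ ^ (α - (n:ℝ) / p) * Nr = C₂ * (Nr ^ θ * Mr ^ (1 - θ)) := by
    rw [hd2, mul_assoc, show Nr ^ (θ - 1) * Mr ^ (1 - θ) * Nr
      = Nr ^ (θ - 1) * Nr * Mr ^ (1 - θ) by ring, hnn]
  have hsplit : (∫⁻ y, ENNReal.ofReal (‖x - y‖ ^ (α - (n:ℝ))) * ENNReal.ofReal |f y|)
      = (∫⁻ y in ball x δ, ENNReal.ofReal (‖x - y‖ ^ (α - (n:ℝ))) * ENNReal.ofReal |f y|)
        + ∫⁻ y in (ball x δ)ᶜ, ENNReal.ofReal (‖x - y‖ ^ (α - (n:ℝ))) * ENNReal.ofReal |f y| :=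
    (lintegral_add_compl _ measurableSet_ball).symm
  have hmain : (∫⁻ y, ENNReal.ofReal (‖x - y‖ ^ (α - (n:ℝ))) * ENNReal.ofReal |f y|)
      ≤ ENNReal.ofReal ((C₁ + C₂) * (Nr ^ θ * Mr ^ (1 - θ))) := by
    rw [hsplit]
    calc (∫⁻ y in ball x δ, ENNReal.ofReal (‖x - y‖ ^ (α - (n:ℝ))) * ENNReal.ofReal |f y|)
          + ∫⁻ y in (ball x δ)ᶜ, ENNReal.ofReal (‖x - y‖ ^ (α - (n:ℝ))) * ENNReal.ofReal |f y|
        ≤ ENNReal.ofReal (C₁ * δ ^ α) * M + ENNReal.ofReal (C₂ * δ ^ (α - (n:ℝ) / p)) * N :=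
          add_le_add (hC₁ f hf x δ hδ) (hC₂ f hf x δ hδ)
      _ = ENNReal.ofReal (C₁ * δ ^ α * Mr) + ENNReal.ofReal (C₂ * δ ^ (α - (n:ℝ) / p) * Nr) := by
          rw [hMof, hNof, ← ENNReal.ofReal_mul (by positivity),
            ← ENNReal.ofReal_mul (by positivity)]
      _ = ENNReal.ofReal ((C₁ + C₂) * (Nr ^ θ * Mr ^ (1 - θ))) := by
          rw [hkey1, hkey2, ← ENNReal.ofReal_add (by positivity) (by positivity)]
          congr 1
          ring
  calc ENNReal.ofReal (rieszGamma n α)⁻¹ *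
        (∫⁻ y, ENNReal.ofReal (‖x - y‖ ^ (α - (n:ℝ))) * ENNReal.ofReal |f y|)
      ≤ ENNReal.ofReal (rieszGamma n α)⁻¹ *
          ENNReal.ofReal ((C₁ + C₂) * (Nr ^ θ * Mr ^ (1 - θ))) := mul_le_mul_right hmain _
    _ = ENNReal.ofReal ((rieszGamma n α)⁻¹ * (C₁ + C₂)) *
          (ENNReal.ofReal (Nr ^ θ) * ENNReal.ofReal (Mr ^ (1 - θ))) := by
        rw [← ENNReal.ofReal_mul (by positivity), ← ENNReal.ofReal_mul (by positivity),
          ← ENNReal.ofReal_mul (by positivity)]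
        congr 1
        ring
    _ = ENNReal.ofReal ((rieszGamma n α)⁻¹ * (C₁ + C₂)) * N ^ θ * M ^ (1 - θ) := by
        rw [hNof, hMof, ENNReal.ofReal_rpow_of_pos hNr, ENNReal.ofReal_rpow_of_pos hMr,
          mul_assoc]
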